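/- For all nonnegative integers x and y with x < y, one has S_{3,2}([x, y)) = S_{3,0}([x, y)) + S_{3,0}([2x, 2y)) − S_{3,0}([4x, 4y)). -/

import Mathlib

/-- binary digit sum -/
def sigma2 (n : ℕ) : ℕ := (Nat.digits 2 n).sum

/-- `S m l x = Σ_{0 ≤ n < x, n ≡ l (mod m)} (−1)^{σ(n)}` -/
def S (m l x : ℕ) : ℤ :=
  ∑ n ∈ (Finset.range x).filter (fun n => n % m = l), (-1 : ℤ) ^ sigma2 n

/-- `Sint m l x y = S_{m,l}([x,y)) = S_{m,l}(y) − S_{m,l}(x)` -/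
def Sint (m l x y : ℕ) : ℤ := S m l y - S m l x

lemma sigma2_two_mul (x : ℕ) : sigma2 (2 * x) = sigma2 x := by
  rcases Nat.eq_zero_or_pos x with h | h
  · simp [h]
  · unfold sigma2
    rw [Nat.digits_def' (by norm_num : 1 < 2) (by omega : 0 < 2 * x)]
    simp [Nat.mul_div_cancel_left x (by norm_num : 0 < 2), Nat.mul_mod_right]

lemma sigma2_two_mul_add_one (x : ℕ) : sigma2 (2 * x + 1) = sigma2 x + 1 := by
  unfold sigma2
  rw [Nat.digits_def' (by norm_num : 1 < 2) (by omega : 0 < 2 * x + 1)]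
  have h1 : (2 * x + 1) % 2 = 1 := by omega
  have h2 : (2 * x + 1) / 2 = x := by omega
  simp only [h1, h2, List.sum_cons]
  omega

lemma S_succ (m l x : ℕ) :
    S m l (x + 1) = S m l x + if x % m = l then (-1 : ℤ) ^ sigma2 x else 0 := by
  unfold S
  rw [Finset.range_add_one, Finset.filter_insert]
  split
  · rw [Finset.sum_insert (by simp)]; ring
  · ring

lemma key (x : ℕ) : S 3 2 x = S 3 0 x + S 3 0 (2 * x) - S 3 0 (4 * x) := by
  induction x with
  | zero => simp [S]
  | succ n ih =>
    have e2 : 2 * (n + 1) = (2 * n + 1) + 1 := by ring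
    have e4 : 4 * (n + 1) = ((4 * n + 3)) + 1 := by ring
    have e4b : 4 * n + 3 = (4 * n + 2) + 1 := by ring
    have e4c : 4 * n + 2 = (4 * n + 1) + 1 := by ring
    rw [e2, e4, S_succ 3 2 n, S_succ 3 0 n, S_succ 3 0 (2 * n + 1),
      S_succ 3 0 (2 * n), S_succ 3 0 (4 * n + 3), e4b, S_succ 3 0 (4 * n + 2), e4c,
      S_succ 3 0 (4 * n + 1), S_succ 3 0 (4 * n), ih]
    simp only [show 4 * n + 1 + 1 + 1 = 4 * n + 3 from by ring,
      show 4 * n + 1 + 1 = 4 * n + 2 from by ring]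
    have s1 : sigma2 (2 * n) = sigma2 n := sigma2_two_mul n
    have s2 : sigma2 (2 * n + 1) = sigma2 n + 1 := sigma2_two_mul_add_one n
    have s3 : sigma2 (4 * n) = sigma2 n := by
      rw [show 4 * n = 2 * (2 * n) by ring, sigma2_two_mul, s1]
    have s4 : sigma2 (4 * n + 1) = sigma2 n + 1 := by
      rw [show 4 * n + 1 = 2 * (2 * n) + 1 by ring, sigma2_two_mul_add_one, s1]
    have s5 : sigma2 (4 * n + 2) = sigma2 n + 1 := by
      rw [show 4 * n + 2 = 2 * (2 * n + 1) by ring, sigma2_two_mul, s2]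
    have s6 : sigma2 (4 * n + 3) = sigma2 n + 2 := by
      rw [show 4 * n + 3 = 2 * (2 * n + 1) + 1 by ring,
        sigma2_two_mul_add_one, s2]
    simp only [s1, s2, s3, s4, s5, s6]
    have h3 : n % 3 = 0 ∨ n % 3 = 1 ∨ n % 3 = 2 := by omega
    rcases h3 with h | h | h <;>
      simp [Nat.mul_mod, Nat.add_mod, h, pow_succ] <;> ring

theorem stmt_11 (x y : ℕ) (hxy : x < y) :
    Sint 3 2 x y = Sint 3 0 x y + Sint 3 0 (2 * x) (2 * y) - Sint 3 0 (4 * x) (4 * y) := by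
  unfold Sint
  rw [key x, key y]
  ring
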